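/- Let (X_n, F_n)_{n∈ℕ} be an adapted sequence of real random variables with |X_n| ≤ a₁/2 almost surely for all n (a₁ > 0), and let (τ_m)_{m∈ℕ} be a sequence of stopping times with respect to (F_n)_{n∈ℕ} such that for every m and every sample point ω, either τ_m(ω) < τ_{m+1}(ω) or τ_m(ω) = τ_{m+1}(ω) = +∞. Define Y_m := X_{τ_m + 1} − E[X_{τ_m + 1} | F_{τ_m}] and G_m := F_{τ_{m+1}}. Then for every δ ∈ (0,1), with probability at least 1 − δ it holds simultaneously for all m ≥ 1 that |∑_{i=1}^{m} Y_i| ≤ 2·√( (∑_{i=1}^{m} Var(Y_i | G_{i−1})) · ln(4m/δ) ) + 4a₁·ln(4m/δ), where Var(Y_i | G_{i−1}) := E[Y_i² | G_{i−1}] − (E[Y_i | G_{i−1}])². In particular the same bound holds with m replaced by any ℕ-valued random variable N. -/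

import Mathlib

open MeasureTheory

/-- The value of the process `X` at the (possibly infinite) random time `τ`, with the
convention `X_∞ := 0`. -/
noncomputable def stoppedVal {Ω : Type*} (X : ℕ → Ω → ℝ) (τ : Ω → ℕ∞) (ω : Ω) : ℝ :=
  if h : τ ω ≠ ⊤ then X ((τ ω).untop h) ω else 0

/-- The σ-algebra at the (possibly infinite) stopping time `τ`:
events `A` (measurable in the ambient σ-algebra) such that `A ∩ {τ = n} ∈ F n` for all `n`. -/
def sigmaAt {Ω : Type*} (m0 : MeasurableSpace Ω) (F : Filtration ℕ m0)
    (τ : Ω → ℕ∞) (hτ : ∀ n : ℕ, MeasurableSet[F n] {ω | τ ω = (n : ℕ∞)}) :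
    MeasurableSpace Ω where
  MeasurableSet' A := MeasurableSet[m0] A ∧
    ∀ n : ℕ, MeasurableSet[F n] (A ∩ {ω | τ ω = (n : ℕ∞)})
  measurableSet_empty :=
    ⟨MeasurableSet.empty, fun n => by simp⟩
  measurableSet_compl := fun A hA => by
    refine ⟨hA.1.compl, fun n => ?_⟩
    have hset : Aᶜ ∩ {ω | τ ω = (n : ℕ∞)} =
        {ω | τ ω = (n : ℕ∞)} \ (A ∩ {ω | τ ω = (n : ℕ∞)}) := by
      ext ω
      simp only [Set.mem_inter_iff, Set.mem_compl_iff, Set.mem_diff, Set.mem_setOf_eq]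
      tauto
    rw [hset]
    exact (hτ n).diff (hA.2 n)
  measurableSet_iUnion := fun s hs => by
    refine ⟨MeasurableSet.iUnion fun i => (hs i).1, fun n => ?_⟩
    rw [Set.iUnion_inter]
    exact MeasurableSet.iUnion fun i => (hs i).2 n

open scoped ENNReal NNReal

set_option maxHeartbeats 1000000

namespace FreedmanAux


variable {Ω : Type*} {m0 : MeasurableSpace Ω}

lemma sigmaAt_le (F : Filtration ℕ m0) (τ : Ω → ℕ∞) (hτ) : sigmaAt m0 F τ hτ ≤ m0 :=
  fun _ hA => hA.1

lemma sigmaAt_mono (F : Filtration ℕ m0) {τ σ : Ω → ℕ∞} (hτ) (hσ) (h : ∀ ω, τ ω ≤ σ ω) :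
    sigmaAt m0 F τ hτ ≤ sigmaAt m0 F σ hσ := by
  intro A hA
  refine ⟨hA.1, fun n => ?_⟩
  have hset : A ∩ {ω | σ ω = (n : ℕ∞)} =
      ⋃ k ∈ Finset.range (n+1), ((A ∩ {ω | τ ω = (k : ℕ∞)}) ∩ {ω | σ ω = (n : ℕ∞)}) := by
    ext ω
    simp only [Set.mem_inter_iff, Set.mem_iUnion, Finset.mem_range, Set.mem_setOf_eq]
    constructor
    · rintro ⟨hAω, hσω⟩
      have hle : τ ω ≤ (n : ℕ∞) := hσω ▸ h ω
      have hne : τ ω ≠ ⊤ := ne_top_of_le_ne_top (by simp) hle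
      obtain ⟨k, hk⟩ : ∃ k : ℕ, τ ω = (k : ℕ∞) := by
        lift τ ω to ℕ using hne with k hk
        exact ⟨k, rfl⟩
      have hkn : k ≤ n := by
        rw [hk] at hle
        exact_mod_cast hle
      exact ⟨k, Nat.lt_succ_of_le hkn, ⟨hAω, hk⟩, hσω⟩
    · rintro ⟨k, _, ⟨hAω, _⟩, hσω⟩; exact ⟨hAω, hσω⟩
  rw [hset]
  refine Set.Finite.measurableSet_biUnion (Finset.range (n+1)).finite_toSet fun k hk => ?_
  have hkn : k ≤ n := Nat.lt_succ_iff.mp (Finset.mem_range.mp (Finset.mem_coe.mp hk))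
  exact ((F.mono hkn) _ (hA.2 k)).inter (hσ n)

lemma stoppedVal_eq_coe {X : ℕ → Ω → ℝ} {σ : Ω → ℕ∞} {ω : Ω} {n : ℕ} (h : σ ω = (n : ℕ∞)) :
    stoppedVal X σ ω = X n ω := by
  simp only [stoppedVal, h]
  rfl

lemma stoppedVal_eq_top {X : ℕ → Ω → ℝ} {σ : Ω → ℕ∞} {ω : Ω} (h : σ ω = ⊤) :
    stoppedVal X σ ω = 0 := by
  rw [stoppedVal, dif_neg (by simp [h])]

lemma stoppedVal_measurable (F : Filtration ℕ m0) {X : ℕ → Ω → ℝ} (hadapt : Adapted F X)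
    {σ : Ω → ℕ∞} (hσ : ∀ n : ℕ, MeasurableSet[F n] {ω | σ ω = (n : ℕ∞)}) :
    Measurable[sigmaAt m0 F σ hσ] (stoppedVal X σ) := by
  intro B hB
  have hXB : ∀ n : ℕ, MeasurableSet[m0] (X n ⁻¹' B) := fun n =>
    (F.le n) _ ((hadapt n) hB)
  have hσn : ∀ n : ℕ, MeasurableSet[m0] {ω | σ ω = (n : ℕ∞)} := fun n => (F.le n) _ (hσ n)
  constructor
  · have hset : stoppedVal X σ ⁻¹' B =
        (⋃ n : ℕ, (X n ⁻¹' B) ∩ {ω | σ ω = (n : ℕ∞)}) ∪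
          ((⋃ n : ℕ, {ω | σ ω = (n : ℕ∞)})ᶜ ∩ {ω | (0:ℝ) ∈ B}) := by
      ext ω
      by_cases h : σ ω = ⊤
      · simp only [Set.mem_preimage, stoppedVal_eq_top h, Set.mem_union, Set.mem_iUnion,
          Set.mem_inter_iff, Set.mem_compl_iff, Set.mem_setOf_eq, h]
        constructor
        · intro h0
          exact Or.inr ⟨by simp, h0⟩
        · rintro (⟨n, _, hn⟩ | ⟨_, h0⟩)
          · exact absurd hn (by simp)
          · exact h0
      · obtain ⟨k, hk⟩ : ∃ k : ℕ, σ ω = (k : ℕ∞) := by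
          lift σ ω to ℕ using h with k hk
          exact ⟨k, rfl⟩
        simp only [Set.mem_preimage, stoppedVal_eq_coe hk, Set.mem_union, Set.mem_iUnion,
          Set.mem_inter_iff, Set.mem_compl_iff, Set.mem_setOf_eq]
        constructor
        · intro hXk
          exact Or.inl ⟨k, hXk, hk⟩
        · rintro (⟨n, hn, hn'⟩ | ⟨hc, _⟩)
          · have hkn : k = n := by
              rw [hk] at hn'
              exact_mod_cast hn'
            rwa [hkn]
          · exact absurd ⟨k, hk⟩ hc
    rw [hset]
    refine ((MeasurableSet.iUnion fun n => (hXB n).inter (hσn n)).union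
      (((MeasurableSet.iUnion fun n => hσn n).compl).inter ?_))
    by_cases h0 : (0:ℝ) ∈ B
    · simp [h0]
    · simp [h0]
  · intro n
    have hset : stoppedVal X σ ⁻¹' B ∩ {ω | σ ω = (n : ℕ∞)} =
        (X n ⁻¹' B) ∩ {ω | σ ω = (n : ℕ∞)} := by
      ext ω
      simp only [Set.mem_inter_iff, Set.mem_preimage, Set.mem_setOf_eq]
      constructor
      · rintro ⟨h1, h2⟩
        rw [stoppedVal_eq_coe h2] at h1
        exact ⟨h1, h2⟩
      · rintro ⟨h1, h2⟩
        rw [stoppedVal_eq_coe h2]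
        exact ⟨h1, h2⟩
    rw [hset]
    exact ((hadapt n) hB).inter (hσ n)



lemma exp_4116 : Real.exp (41/16) ≤ 24 := by
  have h1 : Real.exp (41/16 : ℝ) = Real.exp 1 * Real.exp 1 * Real.exp (9/16) := by
    rw [← Real.exp_add, ← Real.exp_add]; norm_num
  have h2 : Real.exp 1 ≤ 2.7182818286 := Real.exp_one_lt_d9.le
  have h3 : Real.exp (9/16 : ℝ) ≤ 1/(1 - 9/16) :=
    Real.exp_bound_div_one_sub_of_interval (by norm_num) (by norm_num)
  have h4 : (0:ℝ) < Real.exp 1 := Real.exp_pos 1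
  have h5 : (0:ℝ) < Real.exp (9/16) := Real.exp_pos _
  rw [h1]
  nlinarith

lemma det_lemma {a δ s v L : ℝ} {m : ℕ} (ha : 0 < a) (hδ0 : 0 < δ) (hδ1 : δ < 1)
    (hm : 1 ≤ m) (hv0 : 0 ≤ v) (hvm : v ≤ (m:ℝ) * a^2)
    (hL : L = Real.log (4*m/δ))
    (H : ∀ k : ℕ, s ≤ ((k:ℝ)+1)*a*Real.log (4*((k:ℝ)+1)*((k:ℝ)+2)/δ) + 3*v/(4*((k:ℝ)+1)*a)) :
    s ≤ 2*Real.sqrt (v*L) + 4*a*L := by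
  have hm1 : (1:ℝ) ≤ (m:ℝ) := by exact_mod_cast hm
  have hlog2 : (0.6931471803:ℝ) ≤ Real.log 2 := Real.log_two_gt_d9.le
  have hL4 : Real.log 4 ≤ L := by
    rw [hL]
    apply Real.log_le_log (by norm_num)
    rw [le_div_iff₀ hδ0]
    nlinarith
  have hlog4 : Real.log 4 = 2 * Real.log 2 := by
    rw [show (4:ℝ) = 2^2 by norm_num, Real.log_pow]
    push_cast; ring
  have hL1 : (1.386:ℝ) ≤ L := by
    rw [hlog4] at hL4; linarith
  have hL0 : (0:ℝ) < L := by linarith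
  have hsq : (0:ℝ) ≤ Real.sqrt (v*L) := Real.sqrt_nonneg _
  have hlog2L : Real.log 2 ≤ L/2 := by
    rw [hlog4] at hL4
    linarith [Real.log_two_lt_d9.le]
  have hl8 : Real.log (8/δ) ≤ L + Real.log 2 := by
    have h8 : (8:ℝ)/δ ≤ 2*(4*m/δ) := by
      have e : (2:ℝ)*(4*m/δ) = 8*m/δ := by ring
      rw [e, div_le_div_iff₀ hδ0 hδ0]
      nlinarith
    calc Real.log (8/δ) ≤ Real.log (2*(4*m/δ)) := Real.log_le_log (by positivity) h8
      _ = Real.log 2 + Real.log (4*m/δ) := Real.log_mul (by norm_num) (by positivity)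
      _ = L + Real.log 2 := by rw [hL]; ring
  by_cases hcase : v ≤ 4*a^2*L
  · -- small variance : use k = 0
    have H0' : s ≤ a * Real.log (8/δ) + 3*v/(4*a) := by
      have h := H 0
      have e1 : ((0:ℕ):ℝ) + 1 = 1 := by norm_num
      have e2 : ((0:ℕ):ℝ) + 2 = 2 := by norm_num
      rw [e1, e2] at h
      have e3 : (4:ℝ)*1*2/δ = 8/δ := by ring
      rw [e3] at h
      calc s ≤ 1*a*Real.log (8/δ) + 3*v/(4*1*a) := h
        _ = a*Real.log (8/δ) + 3*v/(4*a) := by ring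
    have hbound : s ≤ a*(L + L/2) + 3*v/(4*a) := by
      have h1 : a * Real.log (8/δ) ≤ a*(L + L/2) := by
        apply mul_le_mul_of_nonneg_left _ ha.le
        linarith
      linarith
    by_cases hv : v ≤ a^2*L/16
    · have h3v : 3*v/(4*a) ≤ 3*a*L/64 := by
        rw [div_le_div_iff₀ (by positivity) (by norm_num : (0:ℝ) < 64)]
        nlinarith
      nlinarith
    · push_neg at hv
      have hsqlb : a*L/4 ≤ Real.sqrt (v*L) := by
        have h1 : (a*L/4)^2 ≤ v*L := by nlinarith
        have h2 := Real.sqrt_le_sqrt h1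
        rwa [Real.sqrt_sq (by positivity)] at h2
      have h3v : 3*v/(4*a) ≤ 3*a*L := by
        rw [div_le_iff₀ (by positivity : (0:ℝ) < 4*a)]
        nlinarith
      nlinarith
  · -- large variance case
    push_neg at hcase
    have hvpos : 0 < v := by nlinarith
    set w := Real.sqrt (3*v/(4*a^2*L)) with hw
    have hwpos : 0 < w := Real.sqrt_pos.mpr (by positivity)
    have hw2 : w^2 = 3*v/(4*a^2*L) := Real.sq_sqrt (by positivity)
    have hw2' : w^2 * (4*a^2*L) = 3*v := by
      rw [hw2]
      exact div_mul_cancel₀ _ (by positivity)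
    have hw3 : 3 ≤ w^2 := by
      rw [hw2, le_div_iff₀ (by positivity)]
      nlinarith
    have hw127 : (12:ℝ)/7 ≤ w := by nlinarith
    clear_value w
    have hmv : 4*L < (m:ℝ) := by
      have h1 : v ≤ (m:ℝ)*a^2 := hvm
      nlinarith
    have hm6 : (6:ℝ) ≤ (m:ℝ) := by
      have h5 : (5:ℝ) < (m:ℝ) := by nlinarith
      have h5' : (5:ℕ) < m := by exact_mod_cast h5
      exact_mod_cast h5'
    have hL24 : Real.log 24 ≤ L := by
      rw [hL]
      apply Real.log_le_log (by norm_num)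
      rw [le_div_iff₀ hδ0]
      nlinarith
    have hL2565 : (41:ℝ)/16 ≤ L := by
      refine le_trans ?_ hL24
      have h := exp_4116
      rw [← Real.le_log_iff_exp_le (by norm_num : (0:ℝ) < 24)] at h
      exact h
    set K := ⌈w⌉₊ with hK
    have hK1 : 1 ≤ K := Nat.ceil_pos.mpr hwpos
    have hwK : w ≤ (K:ℝ) := Nat.le_ceil w
    have hKw : (K:ℝ) ≤ w + 1 := (Nat.ceil_lt_add_one hwpos.le).le
    have hKpos : (0:ℝ) < (K:ℝ) := by positivity
    clear_value K
    have hKKm : (K:ℝ)*((K:ℝ)+1) ≤ (m:ℝ) := by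
      have h1 : (K:ℝ)*((K:ℝ)+1) ≤ (w+1)*(w+2) := by nlinarith
      have h2 : (w+1)*(w+2) ≤ (41/12)*w^2 := by nlinarith
      -- (41/12) w² (4a²L) = 41/4 v ≤ (41/4) m a², and 4 a² L ≥ 4 a² (41/16)
      nlinarith [mul_pos (mul_pos (by norm_num : (0:ℝ) < 4) (pow_pos ha 2)) hL0]
    have Hk := H (K-1)
    have hcast : ((K-1:ℕ):ℝ) = (K:ℝ) - 1 := by
      push_cast [Nat.cast_sub hK1]
      ring
    rw [hcast] at Hk
    have hKk : (K:ℝ) - 1 + 1 = (K:ℝ) := by ring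
    have hKk2 : (K:ℝ) - 1 + 2 = (K:ℝ) + 1 := by ring
    rw [hKk, hKk2] at Hk
    have hlogK : Real.log (4*(K:ℝ)*((K:ℝ)+1)/δ) ≤ L := by
      rw [hL]
      apply Real.log_le_log (by positivity)
      rw [div_le_div_iff₀ hδ0 hδ0]
      nlinarith
    have hsq34 : w*a*L = Real.sqrt (3/4*(v*L)) := by
      have e : (3:ℝ)/4*(v*L) = (w*a*L)^2 := by
        have : (w*a*L)^2 = w^2*(4*a^2*L)*(L/4) := by ring
        rw [this, hw2']; ring
      rw [e, Real.sqrt_sq (by positivity)]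
    have ht2 : w*a*L ≤ 7/8*Real.sqrt (v*L) := by
      rw [hsq34]
      have h1 : Real.sqrt (3/4*(v*L)) ≤ Real.sqrt ((7/8)^2*(v*L)) := by
        apply Real.sqrt_le_sqrt
        nlinarith [mul_nonneg hv0 hL0.le]
      rwa [Real.sqrt_mul (by norm_num : (0:ℝ) ≤ (7/8)^2) (v*L), Real.sqrt_sq (by norm_num : (0:ℝ) ≤ 7/8)] at h1
    have ht3 : 3*v/(4*(K:ℝ)*a) ≤ 7/8*Real.sqrt (v*L) := by
      have h1 : 3*v/(4*(K:ℝ)*a) ≤ 3*v/(4*w*a) := by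
        rw [div_le_div_iff₀ (by positivity) (by positivity)]
        have h0 : w*(12*v*a) ≤ (K:ℝ)*(12*v*a) := mul_le_mul_of_nonneg_right hwK (by positivity)
        nlinarith [h0]
      have h2 : 3*v/(4*w*a) = w*a*L := by
        rw [eq_comm, eq_div_iff (by positivity)]
        linear_combination hw2'

      linarith [h1.trans_eq h2, ht2]
    have hfin1 : (K:ℝ)*a*Real.log (4*(K:ℝ)*((K:ℝ)+1)/δ) ≤ (w+1)*a*L := by
      have h1 : (K:ℝ)*a*Real.log (4*(K:ℝ)*((K:ℝ)+1)/δ) ≤ (K:ℝ)*a*L :=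
        mul_le_mul_of_nonneg_left hlogK (by positivity)
      have h2 : (K:ℝ)*a*L ≤ (w+1)*a*L := by
        apply mul_le_mul_of_nonneg_right _ hL0.le
        apply mul_le_mul_of_nonneg_right hKw ha.le
      linarith
    calc s ≤ (K:ℝ)*a*Real.log (4*(K:ℝ)*((K:ℝ)+1)/δ) + 3*v/(4*(K:ℝ)*a) := Hk
      _ ≤ (w+1)*a*L + 7/8*Real.sqrt (v*L) := by linarith
      _ = w*a*L + a*L + 7/8*Real.sqrt (v*L) := by ring
      _ ≤ 7/8*Real.sqrt (v*L) + a*L + 7/8*Real.sqrt (v*L) := by linarith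
      _ ≤ 2*Real.sqrt (v*L) + 4*a*L := by linarith [hsq, mul_pos ha hL0]



lemma ville {Ω : Type*} {m0 : MeasurableSpace Ω} {μ : Measure Ω} [IsProbabilityMeasure μ]
    {𝒢 : Filtration ℕ m0} {f : ℕ → Ω → ℝ}
    (hf : Supermartingale f 𝒢 μ) (hpos : ∀ n ω, 0 ≤ f n ω) (hf0 : ∀ ω, f 0 ω = 1)
    {C : ℝ} (hC : 0 < C) :
    μ {ω | ∃ n, C ≤ f n ω} ≤ ENNReal.ofReal (1/C) := by
  have key : ∀ N : ℕ, μ {ω | ∃ n ≤ N, C ≤ f n ω} ≤ ENNReal.ofReal (1/C) := by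
    intro N
    set τh := fun ω => ((hittingBtwn f (Set.Ici C) 0 N ω : ℕ) : ℕ∞) with hτh
    have hst : IsStoppingTime 𝒢 τh :=
      hf.stronglyAdapted.adapted.isStoppingTime_hittingBtwn measurableSet_Ici
    have hble : ∀ ω, τh ω ≤ N := fun ω => by
      show ((hittingBtwn f (Set.Ici C) 0 N ω : ℕ) : ℕ∞) ≤ N
      exact_mod_cast hittingBtwn_le (u := f) (s := Set.Ici C) (n := 0) ω
    have hint : Integrable (stoppedValue f τh) μ := by
      have h1 := (hf.neg.integrable_stoppedValue hst hble).neg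
      have h2 : (fun ω => -stoppedValue (-f) τh ω) = stoppedValue f τh := by
        funext ω
        simp [stoppedValue]
      rwa [← h2]
    have hexp : ∫ ω, stoppedValue f τh ω ∂μ ≤ 1 := by
      have h0 : IsStoppingTime 𝒢 (fun _ : Ω => (0:ℕ)) := isStoppingTime_const 𝒢 0
      have hmono := hf.neg.expected_stoppedValue_mono h0 hst (fun ω => by
        show ((0:ℕ):ℕ∞) ≤ ((hittingBtwn f (Set.Ici C) 0 N ω : ℕ) : ℕ∞)
        exact_mod_cast Nat.zero_le _) hble
      have e1 : (stoppedValue (-f) (fun _ : Ω => (0:ℕ))) = fun _ : Ω => (-1 : ℝ) := by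
        funext ω; simp [stoppedValue, hf0]
      have e2 : (stoppedValue (-f) τh) = fun ω => -(stoppedValue f τh ω) := by
        funext ω; simp [stoppedValue]
      rw [e1, e2] at hmono
      simp only [integral_neg, integral_const, measure_univ, probReal_univ, ENNReal.toReal_one, smul_eq_mul,
        mul_one, one_smul] at hmono
      linarith
    have hsub : {ω | ∃ n ≤ N, C ≤ f n ω} ⊆ {ω | C ≤ stoppedValue f τh ω} := by
      rintro ω ⟨n, hn, hCn⟩
      exact stoppedValue_hittingBtwn_mem ⟨n, ⟨Nat.zero_le _, hn⟩, hCn⟩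
    refine (measure_mono hsub).trans ?_
    have hm := mul_meas_ge_le_integral_of_nonneg
      (ae_of_all μ (fun ω => hpos _ ω : ∀ ω, 0 ≤ stoppedValue f τh ω))
      hint C
    have hexp' : ∫ x, stoppedValue f τh x ∂μ ≤ 1 := hexp
    have hne : μ {ω | C ≤ stoppedValue f τh ω} ≠ ⊤ := measure_ne_top μ _
    rw [ENNReal.le_ofReal_iff_toReal_le hne (by positivity)]
    rw [le_div_iff₀ hC]
    have hmm : C * (μ {ω | C ≤ stoppedValue f τh ω}).toReal ≤ 1 := le_trans hm hexp'
    linarith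
  have hU : {ω | ∃ n, C ≤ f n ω} = ⋃ N : ℕ, {ω | ∃ n ≤ N, C ≤ f n ω} := by
    ext ω
    simp only [Set.mem_setOf_eq, Set.mem_iUnion]
    exact ⟨fun ⟨n, hn⟩ => ⟨n, n, le_rfl, hn⟩, fun ⟨N, n, _, hn⟩ => ⟨n, hn⟩⟩
  rw [hU]
  have hmono : Monotone (fun N : ℕ => {ω | ∃ n ≤ N, C ≤ f n ω}) := by
    rintro i j hij ω ⟨n, hn, h⟩
    exact ⟨n, hn.trans hij, h⟩
  rw [hmono.directed_le.measure_iUnion]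
  exact iSup_le key


section Core


variable {Ω : Type*} {m0 : MeasurableSpace Ω} {μ : Measure Ω} [IsProbabilityMeasure μ]

/-- One-step conditional exponential bound and supermartingale construction,
leading to the uniform bound. -/
lemma key_bound {𝒢 : ℕ → MeasurableSpace Ω} (hle : ∀ n, 𝒢 n ≤ m0) (hmono : Monotone 𝒢)
    (Y : ℕ → Ω → ℝ) (a : ℝ) (ha : 0 < a)
    (hmeas : ∀ i, 1 ≤ i → StronglyMeasurable[𝒢 i] (Y i))
    (hbdd : ∀ i, 1 ≤ i → ∀ᵐ ω ∂μ, |Y i ω| ≤ a)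
    (hzero : ∀ i, 1 ≤ i → μ[Y i| 𝒢 (i-1)] =ᵐ[μ] 0)
    (lam C : ℝ) (hlam : |lam| * a ≤ 1) (hC : 0 < C) :
    μ {ω | ∃ n : ℕ, C ≤ Real.exp (lam * (∑ i ∈ Finset.Icc 1 n, Y i ω) -
        3/4 * lam^2 * (∑ i ∈ Finset.Icc 1 n, (μ[fun ω' => (Y i ω')^2| 𝒢 (i-1)]) ω))} ≤
      ENNReal.ofReal (1/C) := by
  classical
  set ℱ : Filtration ℕ m0 := ⟨𝒢, hmono, hle⟩ with hℱ
  set W : ℕ → Ω → ℝ := fun i => μ[fun ω' => (Y i ω')^2| 𝒢 (i-1)] with hWdef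
  set S : ℕ → Ω → ℝ := fun n ω => ∑ i ∈ Finset.Icc 1 n, Y i ω with hSdef
  set V : ℕ → Ω → ℝ := fun n ω => ∑ i ∈ Finset.Icc 1 n, W i ω with hVdef
  set f : ℕ → Ω → ℝ := fun n ω => Real.exp (lam * S n ω - 3/4 * lam^2 * V n ω) with hfdef
  -- integrability of Y and Y²
  have hYint : ∀ i, 1 ≤ i → Integrable (Y i) μ := by
    intro i hi
    refine Integrable.mono' (integrable_const a)
      (((hmeas i hi).mono (hle i)).aestronglyMeasurable) ?_
    filter_upwards [hbdd i hi] with ω h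
    rwa [Real.norm_eq_abs]
  have hY2int : ∀ i, 1 ≤ i → Integrable (fun ω => (Y i ω)^2) μ := by
    intro i hi
    refine Integrable.mono' (integrable_const (a^2))
      ((((hmeas i hi).mono (hle i)).measurable.pow_const 2).stronglyMeasurable.aestronglyMeasurable) ?_
    filter_upwards [hbdd i hi] with ω h
    rw [Real.norm_eq_abs, abs_pow]
    exact pow_le_pow_left₀ (abs_nonneg _) h 2
  -- properties of W
  have hWsm : ∀ i, StronglyMeasurable[𝒢 (i-1)] (W i) := fun i => stronglyMeasurable_condExp
  have hWnn : ∀ i, 1 ≤ i → (0:Ω → ℝ) ≤ᵐ[μ] W i := fun i hi =>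
    condExp_nonneg (ae_of_all _ fun ω => sq_nonneg _)
  have hWle : ∀ i, 1 ≤ i → W i ≤ᵐ[μ] fun _ => a^2 := by
    intro i hi
    have h1 : (fun ω => (Y i ω)^2) ≤ᵐ[μ] fun _ => a^2 := by
      filter_upwards [hbdd i hi] with ω h
      calc (Y i ω)^2 = |Y i ω|^2 := (sq_abs _).symm
        _ ≤ a^2 := pow_le_pow_left₀ (abs_nonneg _) h 2
    have h2 := condExp_mono (μ := μ) (m := 𝒢 (i-1)) (hY2int i hi) (integrable_const _) h1
    rwa [condExp_const (hle (i-1))] at h2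
  -- the a.e. regularity set
  have hT : ∀ᵐ ω ∂μ, ∀ i, 1 ≤ i → (|Y i ω| ≤ a ∧ 0 ≤ W i ω ∧ W i ω ≤ a^2) := by
    rw [ae_all_iff]
    intro i
    by_cases hi : 1 ≤ i
    · filter_upwards [hbdd i hi, hWnn i hi, hWle i hi] with ω h1 h2 h3 _
      exact ⟨h1, h2, h3⟩
    · exact ae_of_all _ fun ω hi' => absurd hi' hi
  -- strong measurability of S, V, f
  have hSsm : ∀ n, StronglyMeasurable[𝒢 n] (S n) := by
    intro n
    rw [hSdef]
    apply Finset.stronglyMeasurable_fun_sum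
    intro i hi
    obtain ⟨hi1, hi2⟩ := Finset.mem_Icc.mp hi
    exact (hmeas i hi1).mono (hmono hi2)
  have hVsm : ∀ n, StronglyMeasurable[𝒢 n] (V n) := by
    intro n
    rw [hVdef]
    apply Finset.stronglyMeasurable_fun_sum
    intro i hi
    obtain ⟨hi1, hi2⟩ := Finset.mem_Icc.mp hi
    exact (hWsm i).mono (hmono ((Nat.sub_le i 1).trans hi2))
  have hfsm : ∀ n, StronglyMeasurable[𝒢 n] (f n) := by
    intro n
    rw [hfdef]
    exact (Real.measurable_exp.comp
      ((((hSsm n).measurable.const_mul lam).sub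
        ((hVsm n).measurable.const_mul (3/4*lam^2))))).stronglyMeasurable
  have hfpos : ∀ n ω, 0 < f n ω := fun n ω => Real.exp_pos _
  have hf0 : ∀ ω, f 0 ω = 1 := by
    intro ω
    rw [hfdef]
    have he : Finset.Icc 1 0 = (∅ : Finset ℕ) := Finset.Icc_eq_empty (by omega)
    simp only [hSdef, hVdef, he, Finset.sum_empty, mul_zero, sub_zero, Real.exp_zero]
  -- a.e. bound on f n
  have hfbdd : ∀ n, ∀ᵐ ω ∂μ, ‖f n ω‖ ≤ Real.exp n := by
    intro n
    filter_upwards [hT] with ω hω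
    have hSb : |S n ω| ≤ n * a := by
      rw [hSdef]
      calc |∑ i ∈ Finset.Icc 1 n, Y i ω| ≤ ∑ i ∈ Finset.Icc 1 n, |Y i ω| :=
          Finset.abs_sum_le_sum_abs _ _
        _ ≤ ∑ _i ∈ Finset.Icc 1 n, a := by
          refine Finset.sum_le_sum fun i hi => (hω i (Finset.mem_Icc.mp hi).1).1
        _ = n * a := by
          rw [Finset.sum_const, Nat.card_Icc]
          simp [nsmul_eq_mul]
    have hVnn : 0 ≤ V n ω := by
      rw [hVdef]
      exact Finset.sum_nonneg fun i hi => (hω i (Finset.mem_Icc.mp hi).1).2.1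
    have harg : lam * S n ω - 3/4*lam^2*V n ω ≤ n := by
      have h1 : lam * S n ω ≤ |lam| * (n*a) := by
        calc lam * S n ω ≤ |lam * S n ω| := le_abs_self _
          _ = |lam| * |S n ω| := abs_mul _ _
          _ ≤ |lam| * (n*a) := mul_le_mul_of_nonneg_left hSb (abs_nonneg _)
      have h2 : |lam| * (n*a) ≤ n := by
        calc |lam| * (n*a) = (n:ℝ) * (|lam| * a) := by ring
          _ ≤ (n:ℝ) * 1 := mul_le_mul_of_nonneg_left hlam (Nat.cast_nonneg n)
          _ = n := mul_one _
      have h3 : 0 ≤ 3/4*lam^2*V n ω :=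
        mul_nonneg (mul_nonneg (by norm_num) (sq_nonneg _)) hVnn
      linarith
    rw [Real.norm_eq_abs, abs_of_pos (hfpos n ω), hfdef]
    exact Real.exp_le_exp.mpr harg
  have hfint : ∀ n, Integrable (f n) μ := fun n =>
    Integrable.mono' (integrable_const _) (((hfsm n).mono (hle n)).aestronglyMeasurable) (hfbdd n)
  -- one-step supermartingale inequality
  have hstep : ∀ n, μ[f (n+1)| 𝒢 n] ≤ᵐ[μ] f n := by
    intro n
    have h1n : (1:ℕ) ≤ n + 1 := Nat.le_add_left 1 n
    have hYb := hbdd (n+1) h1n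
    have hzn : μ[Y (n+1)| 𝒢 n] =ᵐ[μ] 0 := hzero (n+1) h1n
    have hWn : W (n+1) = μ[fun ω' => (Y (n+1) ω')^2| 𝒢 n] := rfl
    -- decomposition of f (n+1)
    have hdec : f (n+1) = fun ω =>
        (f n ω * Real.exp (-(3/4)*lam^2 * W (n+1) ω)) * Real.exp (lam * Y (n+1) ω) := by
      funext ω
      rw [hfdef]
      have e1 : S (n+1) ω = S n ω + Y (n+1) ω := by
        rw [hSdef]
        exact Finset.sum_Icc_succ_top h1n _
      have e2 : V (n+1) ω = V n ω + W (n+1) ω := by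
        rw [hVdef]
        exact Finset.sum_Icc_succ_top h1n _
      simp only []
      rw [e1, e2, ← Real.exp_add, ← Real.exp_add]
      congr 1
      ring
    -- integrability of exp(lam Y)
    have hexpYint : Integrable (fun ω => Real.exp (lam * Y (n+1) ω)) μ := by
      refine Integrable.mono' (integrable_const (Real.exp 1))
        ((Real.measurable_exp.comp
          (((hmeas (n+1) h1n).mono (hle (n+1))).measurable.const_mul lam)).stronglyMeasurable.aestronglyMeasurable) ?_
      filter_upwards [hYb] with ω h
      rw [Real.norm_eq_abs, abs_of_pos (Real.exp_pos _)]
      apply Real.exp_le_exp.mpr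
      calc lam * Y (n+1) ω ≤ |lam * Y (n+1) ω| := le_abs_self _
        _ = |lam| * |Y (n+1) ω| := abs_mul _ _
        _ ≤ |lam| * a := mul_le_mul_of_nonneg_left h (abs_nonneg _)
        _ ≤ 1 := hlam
    -- conditional expectation bound for exp(lam Y)
    have hcondY : μ[fun ω => Real.exp (lam * Y (n+1) ω)| 𝒢 n] ≤ᵐ[μ]
        fun ω => 1 + 3/4*lam^2 * W (n+1) ω := by
      -- pointwise bound
      have hpt : (fun ω => Real.exp (lam * Y (n+1) ω)) ≤ᵐ[μ]
          fun ω => 1 + lam * Y (n+1) ω + 3/4*lam^2*(Y (n+1) ω)^2 := by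
        filter_upwards [hYb] with ω h
        have hx : |lam * Y (n+1) ω| ≤ 1 := by
          rw [abs_mul]
          calc |lam| * |Y (n+1) ω| ≤ |lam| * a := mul_le_mul_of_nonneg_left h (abs_nonneg _)
            _ ≤ 1 := hlam
        have hb := Real.exp_bound hx (by norm_num : 0 < 2)
        have hsum : ∑ i ∈ Finset.range 2, (lam * Y (n+1) ω)^i / i.factorial
            = 1 + lam * Y (n+1) ω := by
          simp [Finset.sum_range_succ]
        rw [hsum] at hb
        have hb2 : |Real.exp (lam * Y (n+1) ω) - (1 + lam * Y (n+1) ω)| ≤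
            3/4 * (lam * Y (n+1) ω)^2 := by
          refine hb.trans ?_
          have : |lam * Y (n+1) ω|^2 = (lam * Y (n+1) ω)^2 := sq_abs _
          rw [this]
          norm_num [Nat.factorial]
          linarith [sq_nonneg (lam * Y (n+1) ω)]
        have := (abs_le.mp hb2).2
        nlinarith [sq_nonneg (lam * Y (n+1) ω)]
      -- integrability of the quadratic bound
      have hqint : Integrable (fun ω => 1 + lam * Y (n+1) ω + 3/4*lam^2*(Y (n+1) ω)^2) μ := by
        refine Integrable.add (Integrable.add (integrable_const 1)
          ((hYint (n+1) h1n).const_mul lam)) ((hY2int (n+1) h1n).const_mul (3/4*lam^2))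
      refine (condExp_mono hexpYint hqint hpt).trans ?_
      -- compute condexp of the quadratic
      have e1 : (fun ω => 1 + lam * Y (n+1) ω + 3/4*lam^2*(Y (n+1) ω)^2)
          = (fun _ : Ω => (1:ℝ)) + (lam • Y (n+1) + (3/4*lam^2) • fun ω => (Y (n+1) ω)^2) := by
        funext ω
        simp [smul_eq_mul]
        ring
      rw [e1]
      have h2 := condExp_add (μ := μ) (m := 𝒢 n) (integrable_const (1:ℝ))
        (((hYint (n+1) h1n).smul lam).add ((hY2int (n+1) h1n).smul (3/4*lam^2)))
      refine h2.le.trans ?_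
      have h3 := condExp_add (μ := μ) (m := 𝒢 n) ((hYint (n+1) h1n).smul lam)
        ((hY2int (n+1) h1n).smul (3/4*lam^2))
      have h4 := condExp_smul (μ := μ) (m := 𝒢 n) lam (Y (n+1))
      have h5 := condExp_smul (μ := μ) (m := 𝒢 n) (3/4*lam^2) (fun ω => (Y (n+1) ω)^2)
      rw [condExp_const (hle n)]
      filter_upwards [h3, h4, h5, hzn] with ω e3 e4 e5 ez
      simp only [Pi.add_apply] at *
      rw [e3, e4, e5]
      simp only [Pi.smul_apply, smul_eq_mul, ez, Pi.zero_apply, mul_zero]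
      rw [hWn]
      exact le_of_eq (by ring)
    -- pull-out property
    have hWsm' : StronglyMeasurable[𝒢 n] (W (n+1)) := hWsm (n+1)
    have hg : StronglyMeasurable[𝒢 n]
        (fun ω => f n ω * Real.exp (-(3/4)*lam^2 * W (n+1) ω)) :=
      (hfsm n).mul
        ((Real.measurable_exp.comp (hWsm'.measurable.const_mul (-(3/4)*lam^2))).stronglyMeasurable)
    have hghint : Integrable
        (fun ω => (f n ω * Real.exp (-(3/4)*lam^2*W (n+1) ω)) * Real.exp (lam * Y (n+1) ω)) μ := by
      rw [← hdec]; exact hfint (n+1)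
    have hmul := condExp_mul_of_stronglyMeasurable_left hg hghint hexpYint
    have hmain : μ[f (n+1)| 𝒢 n] =ᵐ[μ] fun ω =>
        (f n ω * Real.exp (-(3/4)*lam^2 * W (n+1) ω)) *
          (μ[fun ω' => Real.exp (lam * Y (n+1) ω')| 𝒢 n]) ω := by
      rw [hdec]; exact hmul
    filter_upwards [hmain, hcondY] with ω h1 h2
    rw [h1]
    have hgnn : 0 ≤ f n ω * Real.exp (-(3/4)*lam^2*W (n+1) ω) :=
      mul_nonneg (hfpos n ω).le (Real.exp_pos _).le
    calc (f n ω * Real.exp (-(3/4)*lam^2*W (n+1) ω)) *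
          (μ[fun ω' => Real.exp (lam * Y (n+1) ω')| 𝒢 n]) ω
        ≤ (f n ω * Real.exp (-(3/4)*lam^2*W (n+1) ω)) * (1 + 3/4*lam^2*W (n+1) ω) :=
          mul_le_mul_of_nonneg_left h2 hgnn
      _ ≤ (f n ω * Real.exp (-(3/4)*lam^2*W (n+1) ω)) * Real.exp (3/4*lam^2*W (n+1) ω) := by
          refine mul_le_mul_of_nonneg_left ?_ hgnn
          have := Real.add_one_le_exp (3/4*lam^2*W (n+1) ω)
          linarith
      _ = f n ω := by
          rw [mul_assoc, ← Real.exp_add,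
            show -(3/4)*lam^2*W (n+1) ω + 3/4*lam^2*W (n+1) ω = 0 by ring,
            Real.exp_zero, mul_one]
  -- conclude via Ville's inequality
  have hadp : StronglyAdapted ℱ f := fun n => hfsm n
  have hsup : Supermartingale f ℱ μ := supermartingale_nat hadp hfint hstep
  have hv := ville hsup (fun n ω => (hfpos n ω).le) hf0 hC
  simpa only [hfdef, hSdef, hVdef, hWdef] using hv


lemma hasSum_inv_succ_mul : HasSum (fun k : ℕ => 1/(((k:ℝ)+1)*((k:ℝ)+2))) 1 := by
  rw [hasSum_iff_tendsto_nat_of_nonneg (fun k => by positivity)]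
  have hps : ∀ n:ℕ, ∑ k ∈ Finset.range n, 1/(((k:ℝ)+1)*((k:ℝ)+2)) = 1 - 1/((n:ℝ)+1) := by
    intro n
    induction n with
    | zero => simp
    | succ n ih =>
      rw [Finset.sum_range_succ, ih]
      have h1 : ((n:ℝ)+1) ≠ 0 := by positivity
      have h2 : ((n:ℝ)+2) ≠ 0 := by positivity
      push_cast
      field_simp
      ring
  simp only [hps]
  have h : Filter.Tendsto (fun n : ℕ => 1 - 1/((n:ℝ)+1)) Filter.atTop (nhds (1 - 0)) :=
    (tendsto_const_nhds (x := (1:ℝ))).sub tendsto_one_div_add_atTop_nhds_zero_nat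
  rwa [sub_zero] at h

lemma core {𝒢 : ℕ → MeasurableSpace Ω} (hle : ∀ n, 𝒢 n ≤ m0) (hmono : Monotone 𝒢)
    (Y : ℕ → Ω → ℝ) (a δ : ℝ) (ha : 0 < a) (hδ0 : 0 < δ) (hδ1 : δ < 1)
    (hmeas : ∀ i, 1 ≤ i → StronglyMeasurable[𝒢 i] (Y i))
    (hbdd : ∀ i, 1 ≤ i → ∀ᵐ ω ∂μ, |Y i ω| ≤ a)
    (hzero : ∀ i, 1 ≤ i → μ[Y i| 𝒢 (i-1)] =ᵐ[μ] 0) :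
    1 - ENNReal.ofReal δ ≤
      μ {ω | ∀ m : ℕ, 1 ≤ m →
        |∑ i ∈ Finset.Icc 1 m, Y i ω| ≤
          2 * Real.sqrt ((∑ i ∈ Finset.Icc 1 m,
              ((μ[fun ω' => (Y i ω') ^ 2|𝒢 (i - 1)]) ω - ((μ[Y i|𝒢 (i - 1)]) ω) ^ 2)) *
            Real.log (4 * m / δ)) + 4 * a * Real.log (4 * m / δ)} := by
  classical
  -- regularity facts for W
  have hY2int : ∀ i, 1 ≤ i → Integrable (fun ω => (Y i ω)^2) μ := by
    intro i hi
    refine Integrable.mono' (integrable_const (a^2))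
      ((((hmeas i hi).mono (hle i)).measurable.pow_const 2).stronglyMeasurable.aestronglyMeasurable) ?_
    filter_upwards [hbdd i hi] with ω h
    rw [Real.norm_eq_abs, abs_pow]
    exact pow_le_pow_left₀ (abs_nonneg _) h 2
  have hWnn : ∀ i, 1 ≤ i → (0:Ω → ℝ) ≤ᵐ[μ] μ[fun ω' => (Y i ω')^2| 𝒢 (i-1)] := fun i hi =>
    condExp_nonneg (ae_of_all _ fun ω => sq_nonneg _)
  have hWle : ∀ i, 1 ≤ i → μ[fun ω' => (Y i ω')^2| 𝒢 (i-1)] ≤ᵐ[μ] fun _ => a^2 := by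
    intro i hi
    have h1 : (fun ω => (Y i ω)^2) ≤ᵐ[μ] fun _ => a^2 := by
      filter_upwards [hbdd i hi] with ω h
      calc (Y i ω)^2 = |Y i ω|^2 := (sq_abs _).symm
        _ ≤ a^2 := pow_le_pow_left₀ (abs_nonneg _) h 2
    have h2 := condExp_mono (μ := μ) (m := 𝒢 (i-1)) (hY2int i hi) (integrable_const _) h1
    rwa [condExp_const (hle (i-1))] at h2
  have hTae : ∀ᵐ ω ∂μ, ∀ i, 1 ≤ i →
      (0 ≤ (μ[fun ω' => (Y i ω')^2| 𝒢 (i-1)]) ω ∧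
       (μ[fun ω' => (Y i ω')^2| 𝒢 (i-1)]) ω ≤ a^2 ∧
       (μ[Y i| 𝒢 (i-1)]) ω = 0) := by
    rw [ae_all_iff]
    intro i
    by_cases hi : 1 ≤ i
    · filter_upwards [hWnn i hi, hWle i hi, hzero i hi] with ω h1 h2 h3 _
      exact ⟨h1, h2, h3⟩
    · exact ae_of_all _ fun ω hi' => absurd hi' hi
  -- bad sets
  have hlamP : ∀ k : ℕ, |1/(((k:ℝ)+1)*a)| * a ≤ 1 := by
    intro k
    have hp : (0:ℝ) < ((k:ℝ)+1)*a := by positivity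
    rw [abs_of_pos (by positivity)]
    rw [div_mul_eq_mul_div, one_mul, div_le_one hp]
    nlinarith
  have hlamM : ∀ k : ℕ, |-(1/(((k:ℝ)+1)*a))| * a ≤ 1 := by
    intro k
    rw [abs_neg]
    exact hlamP k
  have hCk : ∀ k : ℕ, (0:ℝ) < 4*((k:ℝ)+1)*((k:ℝ)+2)/δ := fun k => by positivity
  set B1 : ℕ → Set Ω := fun k => {ω | ∃ n : ℕ,
    4*((k:ℝ)+1)*((k:ℝ)+2)/δ ≤ Real.exp ((1/(((k:ℝ)+1)*a)) * (∑ i ∈ Finset.Icc 1 n, Y i ω) -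
      3/4 * (1/(((k:ℝ)+1)*a))^2 *
        (∑ i ∈ Finset.Icc 1 n, (μ[fun ω' => (Y i ω')^2| 𝒢 (i-1)]) ω))} with hB1
  set B2 : ℕ → Set Ω := fun k => {ω | ∃ n : ℕ,
    4*((k:ℝ)+1)*((k:ℝ)+2)/δ ≤ Real.exp ((-(1/(((k:ℝ)+1)*a))) * (∑ i ∈ Finset.Icc 1 n, Y i ω) -
      3/4 * (-(1/(((k:ℝ)+1)*a)))^2 *
        (∑ i ∈ Finset.Icc 1 n, (μ[fun ω' => (Y i ω')^2| 𝒢 (i-1)]) ω))} with hB2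
  have hbadP : ∀ k : ℕ, μ (B1 k) ≤ ENNReal.ofReal (δ/(4*((k:ℝ)+1)*((k:ℝ)+2))) := by
    intro k
    have h := key_bound hle hmono Y a ha hmeas hbdd hzero (1/(((k:ℝ)+1)*a))
      (4*((k:ℝ)+1)*((k:ℝ)+2)/δ) (hlamP k) (hCk k)
    rw [one_div_div] at h
    exact h
  have hbadM : ∀ k : ℕ, μ (B2 k) ≤ ENNReal.ofReal (δ/(4*((k:ℝ)+1)*((k:ℝ)+2))) := by
    intro k
    have h := key_bound hle hmono Y a ha hmeas hbdd hzero (-(1/(((k:ℝ)+1)*a)))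
      (4*((k:ℝ)+1)*((k:ℝ)+2)/δ) (hlamM k) (hCk k)
    rw [one_div_div] at h
    exact h
  -- the good set is contained in the event
  set T : Set Ω := {ω | ∀ i, 1 ≤ i →
      (0 ≤ (μ[fun ω' => (Y i ω')^2| 𝒢 (i-1)]) ω ∧
       (μ[fun ω' => (Y i ω')^2| 𝒢 (i-1)]) ω ≤ a^2 ∧
       (μ[Y i| 𝒢 (i-1)]) ω = 0)} with hTdef
  have hsub : T ∩ ((⋃ k, B1 k) ∪ (⋃ k, B2 k))ᶜ ⊆
      {ω | ∀ m : ℕ, 1 ≤ m →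
        |∑ i ∈ Finset.Icc 1 m, Y i ω| ≤
          2 * Real.sqrt ((∑ i ∈ Finset.Icc 1 m,
              ((μ[fun ω' => (Y i ω')^2|𝒢 (i - 1)]) ω - ((μ[Y i|𝒢 (i - 1)]) ω) ^ 2)) *
            Real.log (4 * m / δ)) + 4 * a * Real.log (4 * m / δ)} := by
    rintro ω ⟨hreg, hnb⟩ m hm
    have hnb1 : ∀ k, ω ∉ B1 k := fun k hk =>
      hnb (Or.inl (Set.mem_iUnion.mpr ⟨k, hk⟩))
    have hnb2 : ∀ k, ω ∉ B2 k := fun k hk =>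
      hnb (Or.inr (Set.mem_iUnion.mpr ⟨k, hk⟩))
    have hveq : (∑ i ∈ Finset.Icc 1 m,
        ((μ[fun ω' => (Y i ω')^2|𝒢 (i - 1)]) ω - ((μ[Y i|𝒢 (i - 1)]) ω) ^ 2))
        = ∑ i ∈ Finset.Icc 1 m, (μ[fun ω' => (Y i ω')^2|𝒢 (i - 1)]) ω := by
      refine Finset.sum_congr rfl fun i hi => ?_
      rw [(hreg i (Finset.mem_Icc.mp hi).1).2.2]
      ring
    rw [hveq]
    set s : ℝ := ∑ i ∈ Finset.Icc 1 m, Y i ω with hs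
    set v : ℝ := ∑ i ∈ Finset.Icc 1 m, (μ[fun ω' => (Y i ω')^2|𝒢 (i - 1)]) ω with hv
    have hv0 : 0 ≤ v := Finset.sum_nonneg fun i hi => (hreg i (Finset.mem_Icc.mp hi).1).1
    have hvm : v ≤ (m:ℝ)*a^2 := by
      rw [hv]
      calc ∑ i ∈ Finset.Icc 1 m, (μ[fun ω' => (Y i ω')^2|𝒢 (i - 1)]) ω
          ≤ ∑ _i ∈ Finset.Icc 1 m, a^2 :=
            Finset.sum_le_sum fun i hi => (hreg i (Finset.mem_Icc.mp hi).1).2.1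
        _ = (m:ℝ)*a^2 := by
            rw [Finset.sum_const, Nat.card_Icc]
            simp [nsmul_eq_mul]
    -- hypothesis for det_lemma, positive sign
    have hHs : ∀ k : ℕ, s ≤ ((k:ℝ)+1)*a*Real.log (4*((k:ℝ)+1)*((k:ℝ)+2)/δ)
        + 3*v/(4*((k:ℝ)+1)*a) := by
      intro k
      have hp : (0:ℝ) < ((k:ℝ)+1)*a := by positivity
      have hnot := hnb1 k
      rw [hB1] at hnot
      simp only [Set.mem_setOf_eq, not_exists, not_le] at hnot
      have hlt := (hnot m).le
      have hlog : (1/(((k:ℝ)+1)*a)) * s - 3/4 * (1/(((k:ℝ)+1)*a))^2 * v ≤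
          Real.log (4*((k:ℝ)+1)*((k:ℝ)+2)/δ) :=
        (Real.le_log_iff_exp_le (hCk k)).mpr hlt
      have hmul := mul_le_mul_of_nonneg_right hlog hp.le
      have ekey : ((1/(((k:ℝ)+1)*a)) * s - 3/4 * (1/(((k:ℝ)+1)*a))^2 * v) * (((k:ℝ)+1)*a)
          = s - 3*v/(4*((k:ℝ)+1)*a) := by
        field_simp
      rw [ekey] at hmul
      have ecomm : Real.log (4*((k:ℝ)+1)*((k:ℝ)+2)/δ) * (((k:ℝ)+1)*a)
          = ((k:ℝ)+1)*a*Real.log (4*((k:ℝ)+1)*((k:ℝ)+2)/δ) := by ring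
      rw [ecomm] at hmul
      linarith
    have hHm : ∀ k : ℕ, -s ≤ ((k:ℝ)+1)*a*Real.log (4*((k:ℝ)+1)*((k:ℝ)+2)/δ)
        + 3*v/(4*((k:ℝ)+1)*a) := by
      intro k
      have hp : (0:ℝ) < ((k:ℝ)+1)*a := by positivity
      have hnot := hnb2 k
      rw [hB2] at hnot
      simp only [Set.mem_setOf_eq, not_exists, not_le] at hnot
      have hlt := (hnot m).le
      have hlog : (-(1/(((k:ℝ)+1)*a))) * s - 3/4 * (-(1/(((k:ℝ)+1)*a)))^2 * v ≤
          Real.log (4*((k:ℝ)+1)*((k:ℝ)+2)/δ) :=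
        (Real.le_log_iff_exp_le (hCk k)).mpr hlt
      have hmul := mul_le_mul_of_nonneg_right hlog hp.le
      have ekey : ((-(1/(((k:ℝ)+1)*a))) * s - 3/4 * (-(1/(((k:ℝ)+1)*a)))^2 * v) * (((k:ℝ)+1)*a)
          = -s - 3*v/(4*((k:ℝ)+1)*a) := by
        field_simp
      rw [ekey] at hmul
      have ecomm : Real.log (4*((k:ℝ)+1)*((k:ℝ)+2)/δ) * (((k:ℝ)+1)*a)
          = ((k:ℝ)+1)*a*Real.log (4*((k:ℝ)+1)*((k:ℝ)+2)/δ) := by ring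
      rw [ecomm] at hmul
      linarith
    have h1 := det_lemma ha hδ0 hδ1 hm hv0 hvm rfl hHs
    have h2 := det_lemma ha hδ0 hδ1 hm hv0 hvm rfl hHm
    rw [abs_le]
    constructor
    · linarith
    · exact h1
  -- measure bookkeeping
  have hsumP : μ (⋃ k, B1 k) ≤ ENNReal.ofReal (δ/4) := by
    refine (measure_iUnion_le _).trans ?_
    refine le_trans (ENNReal.tsum_le_tsum fun k => hbadP k) ?_
    have hnn : ∀ k : ℕ, 0 ≤ δ/(4*((k:ℝ)+1)*((k:ℝ)+2)) := fun k => by positivity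
    have hHS : HasSum (fun k : ℕ => δ/(4*((k:ℝ)+1)*((k:ℝ)+2))) (δ/4) := by
      have h := hasSum_inv_succ_mul.mul_left (δ/4)
      have he : (fun k : ℕ => δ/4 * (1/(((k:ℝ)+1)*((k:ℝ)+2))))
          = fun k : ℕ => δ/(4*((k:ℝ)+1)*((k:ℝ)+2)) := by
        funext k
        rw [mul_one_div, div_div, ← mul_assoc]
      rw [he, mul_one] at h
      exact h
    rw [← ENNReal.ofReal_tsum_of_nonneg hnn hHS.summable, hHS.tsum_eq]
  have hsumM : μ (⋃ k, B2 k) ≤ ENNReal.ofReal (δ/4) := by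
    refine (measure_iUnion_le _).trans ?_
    refine le_trans (ENNReal.tsum_le_tsum fun k => hbadM k) ?_
    have hnn : ∀ k : ℕ, 0 ≤ δ/(4*((k:ℝ)+1)*((k:ℝ)+2)) := fun k => by positivity
    have hHS : HasSum (fun k : ℕ => δ/(4*((k:ℝ)+1)*((k:ℝ)+2))) (δ/4) := by
      have h := hasSum_inv_succ_mul.mul_left (δ/4)
      have he : (fun k : ℕ => δ/4 * (1/(((k:ℝ)+1)*((k:ℝ)+2))))
          = fun k : ℕ => δ/(4*((k:ℝ)+1)*((k:ℝ)+2)) := by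
        funext k
        rw [mul_one_div, div_div, ← mul_assoc]
      rw [he, mul_one] at h
      exact h
    rw [← ENNReal.ofReal_tsum_of_nonneg hnn hHS.summable, hHS.tsum_eq]
  have hTc : μ Tᶜ = 0 := by
    rw [hTdef, Set.compl_setOf]
    exact ae_iff.mp hTae
  have hGc : μ ((T ∩ ((⋃ k, B1 k) ∪ (⋃ k, B2 k))ᶜ)ᶜ) ≤ ENNReal.ofReal δ := by
    rw [Set.compl_inter, compl_compl]
    calc μ (Tᶜ ∪ ((⋃ k, B1 k) ∪ (⋃ k, B2 k)))
        ≤ μ Tᶜ + μ ((⋃ k, B1 k) ∪ (⋃ k, B2 k)) := measure_union_le _ _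
      _ ≤ 0 + (μ (⋃ k, B1 k) + μ (⋃ k, B2 k)) := by
          exact add_le_add hTc.le (measure_union_le _ _)
      _ ≤ 0 + (ENNReal.ofReal (δ/4) + ENNReal.ofReal (δ/4)) := by
          exact add_le_add le_rfl (add_le_add hsumP hsumM)
      _ ≤ ENNReal.ofReal δ := by
          rw [zero_add, ← ENNReal.ofReal_add (by positivity) (by positivity)]
          exact ENNReal.ofReal_le_ofReal (by linarith)
  rw [tsub_le_iff_right]
  calc (1:ℝ≥0∞) = μ Set.univ := measure_univ.symm
    _ = μ ((T ∩ ((⋃ k, B1 k) ∪ (⋃ k, B2 k))ᶜ) ∪ (T ∩ ((⋃ k, B1 k) ∪ (⋃ k, B2 k))ᶜ)ᶜ) := by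
        rw [Set.union_compl_self]
    _ ≤ μ (T ∩ ((⋃ k, B1 k) ∪ (⋃ k, B2 k))ᶜ) + μ ((T ∩ ((⋃ k, B1 k) ∪ (⋃ k, B2 k))ᶜ)ᶜ) :=
        measure_union_le _ _
    _ ≤ μ {ω | ∀ m : ℕ, 1 ≤ m →
          |∑ i ∈ Finset.Icc 1 m, Y i ω| ≤
            2 * Real.sqrt ((∑ i ∈ Finset.Icc 1 m,
                ((μ[fun ω' => (Y i ω')^2|𝒢 (i - 1)]) ω - ((μ[Y i|𝒢 (i - 1)]) ω) ^ 2)) *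
              Real.log (4 * m / δ)) + 4 * a * Real.log (4 * m / δ)} + ENNReal.ofReal δ :=
        add_le_add (measure_mono hsub) hGc

end Core

end FreedmanAux

open FreedmanAux

/-- **Optional-skipping concentration, Freedman part (Theorem 7).**
Let `(X n, F n)` be adapted with `|X n| ≤ a₁/2` a.s. and `(τ m)` a strictly increasing
sequence of stopping times. With `Y m := X (τ m + 1) - E[X (τ m + 1) | F (τ m)]` and
`G m := F (τ (m+1))`, for every `δ ∈ (0,1)`, with probability at least `1 - δ`,
simultaneously for all `m ≥ 1`,
`|∑_{i=1}^m Y i| ≤ 2 √((∑_{i=1}^m Var(Y i | G (i-1))) log (4m/δ)) + 4 a₁ log (4m/δ)`;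
in particular the same bound holds with `m` replaced by any `ℕ`-valued random variable `N`. -/
theorem stmt_6 {Ω : Type*} {m0 : MeasurableSpace Ω} {μ : Measure Ω} [IsProbabilityMeasure μ]
    (F : Filtration ℕ m0) (X : ℕ → Ω → ℝ) (a₁ : ℝ) (ha₁ : 0 < a₁)
    (hadapt : Adapted F X)
    (hbdd : ∀ n, ∀ᵐ ω ∂μ, |X n ω| ≤ a₁ / 2)
    (τ : ℕ → Ω → ℕ∞)
    (hτ : ∀ m n : ℕ, MeasurableSet[F n] {ω | τ m ω = (n : ℕ∞)})
    (hincr : ∀ m ω, τ m ω < τ (m + 1) ω ∨ (τ m ω = ⊤ ∧ τ (m + 1) ω = ⊤))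
    (Y : ℕ → Ω → ℝ)
    (hY : ∀ m, Y m = fun ω =>
      stoppedVal X (fun ω' => τ m ω' + 1) ω -
        (μ[stoppedVal X (fun ω' => τ m ω' + 1)|sigmaAt m0 F (τ m) (hτ m)]) ω)
    (G : ℕ → MeasurableSpace Ω)
    (hG : ∀ m, G m = sigmaAt m0 F (τ (m + 1)) (hτ (m + 1)))
    (δ : ℝ) (hδ0 : 0 < δ) (hδ1 : δ < 1) :
    1 - ENNReal.ofReal δ ≤
        μ {ω | ∀ m : ℕ, 1 ≤ m →
          |∑ i ∈ Finset.Icc 1 m, Y i ω| ≤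
            2 * Real.sqrt ((∑ i ∈ Finset.Icc 1 m,
                ((μ[fun ω' => (Y i ω') ^ 2|G (i - 1)]) ω - ((μ[Y i|G (i - 1)]) ω) ^ 2)) *
              Real.log (4 * m / δ)) + 4 * a₁ * Real.log (4 * m / δ)} ∧
      ∀ N : Ω → ℕ, Measurable N →
        1 - ENNReal.ofReal δ ≤
          μ {ω | |∑ i ∈ Finset.Icc 1 (N ω), Y i ω| ≤
            2 * Real.sqrt ((∑ i ∈ Finset.Icc 1 (N ω),
                ((μ[fun ω' => (Y i ω') ^ 2|G (i - 1)]) ω - ((μ[Y i|G (i - 1)]) ω) ^ 2)) *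
              Real.log (4 * N ω / δ)) + 4 * a₁ * Real.log (4 * N ω / δ)} := by
  classical
  -- monotonicity facts for the stopping times
  have hτle : ∀ m ω, τ m ω ≤ τ (m+1) ω := by
    intro m ω
    rcases hincr m ω with h | ⟨h1, h2⟩
    · exact h.le
    · rw [h1, h2]
  have hτle' : ∀ i j, i ≤ j → ∀ ω, τ i ω ≤ τ j ω := by
    intro i j hij ω
    exact monotone_nat_of_le_succ (fun m => hτle m ω) hij
  have hτsucc : ∀ m ω, τ m ω + 1 ≤ τ (m+1) ω := by
    intro m ω
    rcases hincr m ω with h | ⟨h1, h2⟩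
    · exact Order.add_one_le_of_lt h
    · rw [h1, h2]; exact le_top
  have hGle : ∀ n, G n ≤ m0 := by
    intro n; rw [hG n]; exact sigmaAt_le F _ _
  have hGmono : Monotone G := by
    intro i j hij
    rw [hG i, hG j]
    exact sigmaAt_mono F _ _ (fun ω => hτle' (i+1) (j+1) (Nat.succ_le_succ hij) ω)
  -- τ m + 1 is a stopping time
  have hτ1 : ∀ m, ∀ n : ℕ, MeasurableSet[F n] {ω | τ m ω + 1 = (n : ℕ∞)} := by
    intro m n
    cases n with
    | zero =>
      have hset : {ω | τ m ω + 1 = ((0:ℕ) : ℕ∞)} = (∅ : Set Ω) := by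
        ext ω
        simp only [Set.mem_setOf_eq, Set.mem_empty_iff_false, iff_false, Nat.cast_zero]
        intro h
        exact absurd h (by simp [add_eq_zero])
      rw [hset]
      exact @MeasurableSet.empty _ (F 0)
    | succ k =>
      have hset : {ω | τ m ω + 1 = ((k+1:ℕ) : ℕ∞)} = {ω | τ m ω = (k : ℕ∞)} := by
        ext ω
        simp only [Set.mem_setOf_eq]
        rw [show ((k+1:ℕ):ℕ∞) = (k:ℕ∞) + 1 by push_cast; rfl]
        exact (ENat.add_left_injective_of_ne_top (n := 1) (by simp)).eq_iff
      rw [hset]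
      exact F.mono (Nat.le_succ k) _ (hτ m k)
  -- measurability of the stopped values
  have hZsm : ∀ m, StronglyMeasurable[sigmaAt m0 F (fun ω => τ m ω + 1) (hτ1 m)]
      (stoppedVal X (fun ω => τ m ω + 1)) :=
    fun m => (stoppedVal_measurable F hadapt (hτ1 m)).stronglyMeasurable
  have hsub1 : ∀ m, sigmaAt m0 F (fun ω => τ m ω + 1) (hτ1 m) ≤
      sigmaAt m0 F (τ (m+1)) (hτ (m+1)) :=
    fun m => sigmaAt_mono F _ _ (fun ω => hτsucc m ω)
  have hsub2 : ∀ m, sigmaAt m0 F (τ m) (hτ m) ≤ sigmaAt m0 F (τ (m+1)) (hτ (m+1)) :=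
    fun m => sigmaAt_mono F _ _ (fun ω => hτle m ω)
  have hYsm : ∀ i, 1 ≤ i → StronglyMeasurable[G i] (Y i) := by
    intro i _
    rw [hY i, hG i]
    exact StronglyMeasurable.sub ((hZsm i).mono (hsub1 i))
      (stronglyMeasurable_condExp.mono (hsub2 i))
  -- boundedness of the stopped values
  have hZbdd : ∀ m, ∀ᵐ ω ∂μ, |stoppedVal X (fun ω' => τ m ω' + 1) ω| ≤ a₁/2 := by
    intro m
    filter_upwards [(ae_all_iff).mpr hbdd] with ω hω
    by_cases h : τ m ω + 1 = ⊤
    · rw [stoppedVal_eq_top (σ := fun ω' => τ m ω' + 1) h]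
      simp only [abs_zero]
      linarith
    · obtain ⟨k, hk⟩ : ∃ k : ℕ, τ m ω + 1 = (k : ℕ∞) := by
        lift (τ m ω + 1) to ℕ using h with k hk
        exact ⟨k, rfl⟩
      rw [stoppedVal_eq_coe (σ := fun ω' => τ m ω' + 1) hk]
      exact hω k
  have hZint : ∀ m, Integrable (stoppedVal X (fun ω' => τ m ω' + 1)) μ := by
    intro m
    refine Integrable.mono' (integrable_const (a₁/2))
      (((hZsm m).mono (fun A hA => ((hsub1 m) A hA).1)).aestronglyMeasurable) ?_
    filter_upwards [hZbdd m] with ω h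
    rwa [Real.norm_eq_abs]
  -- boundedness of Y
  have hYbdd : ∀ i, 1 ≤ i → ∀ᵐ ω ∂μ, |Y i ω| ≤ a₁ := by
    intro i _
    have hup : μ[stoppedVal X (fun ω' => τ i ω' + 1)|sigmaAt m0 F (τ i) (hτ i)] ≤ᵐ[μ]
        fun _ => a₁/2 := by
      have h := condExp_mono (μ := μ) (m := sigmaAt m0 F (τ i) (hτ i)) (hZint i)
        (integrable_const (a₁/2))
        (by filter_upwards [hZbdd i] with ω h using (abs_le.mp h).2)
      rwa [condExp_const (sigmaAt_le F _ _)] at h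
    have hlo : (fun _ : Ω => -(a₁/2)) ≤ᵐ[μ]
        μ[stoppedVal X (fun ω' => τ i ω' + 1)|sigmaAt m0 F (τ i) (hτ i)] := by
      have h := condExp_mono (μ := μ) (m := sigmaAt m0 F (τ i) (hτ i))
        (integrable_const (-(a₁/2))) (hZint i)
        (by filter_upwards [hZbdd i] with ω h using (abs_le.mp h).1)
      rwa [condExp_const (sigmaAt_le F _ _)] at h
    filter_upwards [hZbdd i, hup, hlo] with ω h1 h2 h3
    have he : Y i ω = stoppedVal X (fun ω' => τ i ω' + 1) ω -
        (μ[stoppedVal X (fun ω' => τ i ω' + 1)|sigmaAt m0 F (τ i) (hτ i)]) ω :=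
      congrFun (hY i) ω
    rw [he]
    have h4 := abs_le.mp h1
    rw [abs_le]
    constructor <;> [linarith; linarith]
  -- zero conditional mean
  have hYzero : ∀ i, 1 ≤ i → μ[Y i|G (i-1)] =ᵐ[μ] 0 := by
    intro i hi
    obtain ⟨j, rfl⟩ : ∃ j, i = j + 1 := ⟨i - 1, (Nat.succ_pred_eq_of_pos hi).symm⟩
    have hGe : G (j+1-1) = sigmaAt m0 F (τ (j+1)) (hτ (j+1)) := hG j
    rw [hGe, hY (j+1)]
    have hmle : sigmaAt m0 F (τ (j+1)) (hτ (j+1)) ≤ m0 := sigmaAt_le F _ _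
    have h1 := condExp_sub (μ := μ) (m := sigmaAt m0 F (τ (j+1)) (hτ (j+1))) (hZint (j+1))
      (integrable_condExp (f := stoppedVal X (fun ω' => τ (j+1) ω' + 1))
        (m := sigmaAt m0 F (τ (j+1)) (hτ (j+1))))
    have h2 : μ[μ[stoppedVal X (fun ω' => τ (j+1) ω' + 1)|sigmaAt m0 F (τ (j+1)) (hτ (j+1))]|
        sigmaAt m0 F (τ (j+1)) (hτ (j+1))] =
        μ[stoppedVal X (fun ω' => τ (j+1) ω' + 1)|sigmaAt m0 F (τ (j+1)) (hτ (j+1))] :=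
      condExp_of_stronglyMeasurable hmle stronglyMeasurable_condExp integrable_condExp
    have h3 : (fun ω => stoppedVal X (fun ω' => τ (j+1) ω' + 1) ω -
        (μ[stoppedVal X (fun ω' => τ (j+1) ω' + 1)|sigmaAt m0 F (τ (j+1)) (hτ (j+1))]) ω) =
        stoppedVal X (fun ω' => τ (j+1) ω' + 1) -
          μ[stoppedVal X (fun ω' => τ (j+1) ω' + 1)|sigmaAt m0 F (τ (j+1)) (hτ (j+1))] := rfl
    rw [h3]
    refine h1.trans ?_
    rw [h2]
    filter_upwards with ω
    simp
  -- apply the core concentration result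
  have hmain := core (μ := μ) hGle hGmono Y a₁ δ ha₁ hδ0 hδ1 hYsm hYbdd hYzero
  refine ⟨hmain, ?_⟩
  intro N _hN
  refine le_trans hmain (measure_mono ?_)
  intro ω hω
  simp only [Set.mem_setOf_eq] at *
  by_cases h : 1 ≤ N ω
  · exact hω (N ω) h
  · have h0 : N ω = 0 := by omega
    rw [h0]
    rw [show Finset.Icc 1 0 = (∅ : Finset ℕ) from Finset.Icc_eq_empty (by omega)]
    simp
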